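/- Let p be a prime, let M, M̃ ∈ M_n(ℤ) be expanding matrices and D, D̃ ⊂ ℤ^n finite digit sets, and let A, B ∈ M_n(ℤ) have determinants not divisible by p with AB ≡ I (mod p), M̃ = AMB and D = B D̃. If Z_{D̃}^n ⊆ E̊_p^n, then for every integer j ≥ 1, (M^t)^j Z(m_D) ⊆ (1/(det AB)^{j+1}) · A^t ((M̃^t)^j Z(m_{D̃}) + ℤ^n). -/

import Mathlib

open MeasureTheory Matrix Set Complex
open scoped Real Pointwise ENNReal

noncomputable section

namespace SA

variable {n : ℕ}

/-- Cast an integer matrix to a real matrix. -/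
def toR (M : Matrix (Fin n) (Fin n) ℤ) : Matrix (Fin n) (Fin n) ℝ :=
  M.map (Int.cast : ℤ → ℝ)

/-- Cast an integer vector to a real vector. -/
def vecR (d : Fin n → ℤ) : Fin n → ℝ := fun i => (d i : ℝ)

/-- A real matrix is expanding if all of its complex eigenvalues have modulus > 1. -/
def IsExpandingR (M : Matrix (Fin n) (Fin n) ℝ) : Prop :=
  ∀ z : ℂ, (M.map (Complex.ofReal)).charpoly.IsRoot z → 1 < ‖z‖

/-- An integer matrix is expanding if all of its complex eigenvalues have modulus > 1. -/
def IsExpanding (M : Matrix (Fin n) (Fin n) ℤ) : Prop :=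
  IsExpandingR (toR M)

/-- Standard inner product on `ℝ^n`. -/
def dotR (x y : Fin n → ℝ) : ℝ := ∑ i, x i * y i

/-- The exponential function `e_λ(x) = e^{2πi⟨λ,x⟩}`. -/
def expFun (lam : Fin n → ℝ) : (Fin n → ℝ) → ℂ :=
  fun x => Complex.exp (2 * Real.pi * Complex.I * (dotR lam x))

/-- Mask polynomial of a finite real digit set. -/
def maskR (D : Finset (Fin n → ℝ)) (x : Fin n → ℝ) : ℂ :=
  (D.card : ℂ)⁻¹ * ∑ d ∈ D, Complex.exp (2 * Real.pi * Complex.I * (dotR d x))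

/-- Zero set of the mask polynomial of a real digit set. -/
def maskZR (D : Finset (Fin n → ℝ)) : Set (Fin n → ℝ) := {x | maskR D x = 0}

/-- Mask polynomial of a finite integer digit set. -/
def mask (D : Finset (Fin n → ℤ)) (x : Fin n → ℝ) : ℂ :=
  (D.card : ℂ)⁻¹ * ∑ d ∈ D, Complex.exp (2 * Real.pi * Complex.I * (dotR (vecR d) x))

/-- Zero set `Z(m_D)` of the mask polynomial of an integer digit set. -/
def maskZ (D : Finset (Fin n → ℤ)) : Set (Fin n → ℝ) := {x | mask D x = 0}

/-- `Z_D^n := Z(m_D) ∩ [0,1)^n`. -/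
def ZDn (D : Finset (Fin n → ℤ)) : Set (Fin n → ℝ) :=
  maskZ D ∩ {x | ∀ i, 0 ≤ x i ∧ x i < 1}

/-- `E̊_p^n := (1/p){(l₁,…,l_n) : 0 ≤ lᵢ ≤ p-1} \ {0}`. -/
def Ering (p n : ℕ) : Set (Fin n → ℝ) :=
  {x | (∃ l : Fin n → ℕ, (∀ i, l i ≤ p - 1) ∧ ∀ i, x i = (l i : ℝ) / p) ∧ x ≠ 0}

/-- The integer lattice `ℤ^n` inside `ℝ^n`. -/
def latticeZ (n : ℕ) : Set (Fin n → ℝ) := {x | ∀ i, ∃ k : ℤ, x i = (k : ℝ)}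

/-- `μ` is the self-affine measure generated by the real expanding matrix `M`
and the real digit set `D`: it is a Borel probability measure satisfying
`μ = (1/|D|) ∑_{d∈D} μ ∘ φ_d⁻¹` with `φ_d(x) = M⁻¹(x+d)`. -/
def IsSelfAffineR (M : Matrix (Fin n) (Fin n) ℝ) (D : Finset (Fin n → ℝ))
    (μ : Measure (Fin n → ℝ)) : Prop :=
  IsProbabilityMeasure μ ∧
    μ = (D.card : ℝ≥0∞)⁻¹ • ∑ d ∈ D, μ.map (fun x => M⁻¹.mulVec (x + d))

/-- `μ` is the self-affine measure generated by the integer expanding matrix `M`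
and the integer digit set `D`. -/
def IsSelfAffine (M : Matrix (Fin n) (Fin n) ℤ) (D : Finset (Fin n → ℤ))
    (μ : Measure (Fin n → ℝ)) : Prop :=
  IsProbabilityMeasure μ ∧
    μ = (D.card : ℝ≥0∞)⁻¹ • ∑ d ∈ D, μ.map (fun x => (toR M)⁻¹.mulVec (x + vecR d))

/-- Fourier transform `μ̂(ξ) = ∫ e^{2πi⟨x,ξ⟩} dμ(x)`. -/
def FT (μ : Measure (Fin n → ℝ)) (ξ : Fin n → ℝ) : ℂ :=
  ∫ x, Complex.exp (2 * Real.pi * Complex.I * (dotR x ξ)) ∂μ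

/-- The family of exponentials `E(Λ)` is mutually orthogonal in `L²(μ)`:
`μ̂(λ - λ') = 0` for all distinct `λ, λ' ∈ Λ`. -/
def OrthExp (μ : Measure (Fin n → ℝ)) (Λ : Set (Fin n → ℝ)) : Prop :=
  ∀ a ∈ Λ, ∀ b ∈ Λ, a ≠ b → FT μ (a - b) = 0

/-- `Λ` is a spectrum of `μ`: the exponentials `{e^{2πi⟨λ,x⟩} : λ ∈ Λ}` form an
orthonormal (Hilbert) basis of `L²(μ)`. -/
def IsSpectrum (μ : Measure (Fin n → ℝ)) (Λ : Set (Fin n → ℝ)) : Prop :=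
  ∃ b : HilbertBasis Λ ℂ (Lp ℂ 2 μ), ∀ l : Λ, (b l : Lp ℂ 2 μ) =ᵐ[μ] expFun (l : Fin n → ℝ)

/-- `μ` is a spectral measure. -/
def IsSpectralMeasure (μ : Measure (Fin n → ℝ)) : Prop :=
  ∃ Λ : Set (Fin n → ℝ), Λ.Countable ∧ IsSpectrum μ Λ

/-- `(M, D)` is admissible: there is `S ⊂ ℤ^n` with `|S| = |D|` such that
`H = (1/√|S|)[e^{2πi⟨M⁻¹d,s⟩}]_{d∈D,s∈S}` satisfies `H^*H = I`. -/
def Admissible (M : Matrix (Fin n) (Fin n) ℤ) (D : Finset (Fin n → ℤ)) : Prop :=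
  ∃ S : Finset (Fin n → ℤ), S.card = D.card ∧
    letI H : Matrix {d // d ∈ D} {s // s ∈ S} ℂ := fun d s =>
      ((1 : ℂ) / (Real.sqrt S.card : ℂ)) *
        Complex.exp (2 * Real.pi * Complex.I *
          (dotR ((toR M)⁻¹.mulVec (vecR (d : Fin n → ℤ))) (vecR (s : Fin n → ℤ))))
    Hᴴ * H = 1

/-- Two matrices are congruent entrywise modulo `p`. -/
def ModEq (p : ℕ) (A B : Matrix (Fin n) (Fin n) ℤ) : Prop :=
  ∀ i j, (p : ℤ) ∣ (A i j - B i j)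

/-- `(M, D)` and `(M̃, D̃)` are conjugate in `GL_n(p)`: there are integer matrices
`A, B` with determinants prime to `p`, `AB ≡ I (mod p)`, `M̃ = AMB`, and either
`D = B D̃` or `D̃ = A D`. -/
def ConjugateGL (p : ℕ) (M Mt : Matrix (Fin n) (Fin n) ℤ)
    (D Dt : Finset (Fin n → ℤ)) : Prop :=
  ∃ A B : Matrix (Fin n) (Fin n) ℤ,
    ¬ (p : ℤ) ∣ A.det ∧ ¬ (p : ℤ) ∣ B.det ∧ ModEq p (A * B) 1 ∧ Mt = A * M * B ∧
      ((∀ d, d ∈ D ↔ ∃ dt ∈ Dt, d = B.mulVec dt) ∨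
       (∀ dt, dt ∈ Dt ↔ ∃ d ∈ D, dt = A.mulVec d))



lemma toR_eq (M : Matrix (Fin n) (Fin n) ℤ) :
    toR M = (Int.castRingHom ℝ).mapMatrix M := rfl

lemma toR_mul (X Y : Matrix (Fin n) (Fin n) ℤ) : toR (X * Y) = toR X * toR Y :=
  _root_.map_mul (Int.castRingHom ℝ).mapMatrix X Y

lemma toR_add (X Y : Matrix (Fin n) (Fin n) ℤ) : toR (X + Y) = toR X + toR Y :=
  _root_.map_add (Int.castRingHom ℝ).mapMatrix X Y

lemma toR_pow (X : Matrix (Fin n) (Fin n) ℤ) (j : ℕ) : toR (X ^ j) = toR X ^ j :=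
  _root_.map_pow (Int.castRingHom ℝ).mapMatrix X j

lemma toR_smul (c : ℤ) (X : Matrix (Fin n) (Fin n) ℤ) :
    toR (c • X) = (c : ℝ) • toR X := by
  ext i k
  simp only [toR, Matrix.map_apply, Matrix.smul_apply, smul_eq_mul]
  push_cast
  ring

/-- The auxiliary integer matrix `R`. -/
def Rmat (M Mt A B : Matrix (Fin n) (Fin n) ℤ) (j : ℕ) : Matrix (Fin n) (Fin n) ℤ :=
  (A * B).det ^ j • (B.adjugate * M ^ j * A.adjugate) - Mt ^ j

lemma key_id (M Mt A B : Matrix (Fin n) (Fin n) ℤ) (j : ℕ) :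
    B * (Mt ^ j + ((A * B).det ^ j • (B.adjugate * M ^ j * A.adjugate) - Mt ^ j)) * A
      = ((A * B).det ^ (j + 1)) • M ^ j := by
  have h3 : Mt ^ j + ((A * B).det ^ j • (B.adjugate * M ^ j * A.adjugate) - Mt ^ j)
      = (A * B).det ^ j • (B.adjugate * M ^ j * A.adjugate) := by abel
  rw [h3, Matrix.mul_smul, Matrix.smul_mul]
  rw [show B * (B.adjugate * M ^ j * A.adjugate) * A
      = (B * B.adjugate) * M ^ j * (A.adjugate * A) by noncomm_ring]
  rw [Matrix.mul_adjugate, Matrix.adjugate_mul, Matrix.smul_mul, Matrix.mul_smul, one_mul,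
    mul_one, smul_smul, smul_smul, Matrix.det_mul, pow_succ]
  ring_nf

lemma conj_pow {R : Type*} [CommRing R] (a b m : Matrix (Fin n) (Fin n) R)
    (hab : a * b = 1) (hba : b * a = 1) (j : ℕ) : (a * m * b) ^ j = a * m ^ j * b := by
  induction j with
  | zero => simp [hab]
  | succ k ih =>
    rw [pow_succ, ih]
    have h : a * m ^ k * b * (a * m * b) = a * m ^ k * (b * a) * m * b := by noncomm_ring
    rw [h, hba, pow_succ]
    noncomm_ring

lemma dot_mulVec (B : Matrix (Fin n) (Fin n) ℤ) (d : Fin n → ℤ) (x : Fin n → ℝ) :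
    dotR (vecR (B.mulVec d)) x = dotR (vecR d) ((toR B)ᵀ.mulVec x) := by
  unfold dotR vecR
  simp only [Matrix.mulVec, dotProduct, Matrix.transpose_apply, toR, Matrix.map_apply]
  push_cast
  simp_rw [Finset.sum_mul, Finset.mul_sum]
  rw [Finset.sum_comm]
  exact Finset.sum_congr rfl fun k _ => Finset.sum_congr rfl fun i _ => by ring

lemma mask_periodic (Dt : Finset (Fin n → ℤ)) (z : Fin n → ℝ) (m : Fin n → ℤ) :
    mask Dt (z + vecR m) = mask Dt z := by
  unfold mask
  congr 1
  apply Finset.sum_congr rfl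
  intro d _
  have hdot : dotR (vecR d) (z + vecR m) = dotR (vecR d) z + ((∑ i, d i * m i : ℤ) : ℝ) := by
    unfold dotR vecR
    push_cast
    rw [← Finset.sum_add_distrib]
    exact Finset.sum_congr rfl fun i _ => by simp [mul_add]
  rw [hdot]
  push_cast
  rw [mul_add, Complex.exp_add]
  rw [show (2 * (Real.pi : ℂ) * Complex.I * (∑ i, (d i : ℂ) * (m i : ℂ)))
      = ((∑ i, d i * m i : ℤ) : ℂ) * (2 * Real.pi * Complex.I) by push_cast; ring]
  rw [Complex.exp_int_mul_two_pi_mul_I, mul_one]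

lemma mulVec_inj {B : Matrix (Fin n) (Fin n) ℤ} (hBdet : B.det ≠ 0) :
    Function.Injective B.mulVec := by
  intro u w h
  have h0 : B.mulVec (u - w) = 0 := by rw [Matrix.mulVec_sub, h, sub_self]
  have h1 : B.adjugate.mulVec (B.mulVec (u - w)) = 0 := by rw [h0, Matrix.mulVec_zero]
  rw [Matrix.mulVec_mulVec, Matrix.adjugate_mul, Matrix.smul_mulVec,
    Matrix.one_mulVec] at h1
  exact sub_eq_zero.mp ((smul_eq_zero.mp h1).resolve_left hBdet)

lemma mask_comp (B : Matrix (Fin n) (Fin n) ℤ) (hBdet : B.det ≠ 0)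
    (D Dt : Finset (Fin n → ℤ)) (hDeq : ∀ d, d ∈ D ↔ ∃ dt ∈ Dt, d = B.mulVec dt)
    (x : Fin n → ℝ) : mask D x = mask Dt ((toR B)ᵀ.mulVec x) := by
  have hBinj := mulVec_inj hBdet
  have hDim : D = Dt.image (fun dt => B.mulVec dt) := by
    ext d
    simp only [Finset.mem_image]
    rw [hDeq d]
    constructor <;> rintro ⟨dt, h1, h2⟩ <;> exact ⟨dt, h1, h2.symm⟩
  unfold mask
  rw [hDim, Finset.card_image_of_injective Dt hBinj,
    Finset.sum_image (fun a _ b _ h => hBinj h)]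
  congr 1
  exact Finset.sum_congr rfl fun dt _ => by rw [dot_mulVec]

lemma R_dvd (p : ℕ) (M Mt A B : Matrix (Fin n) (Fin n) ℤ)
    (hAB : ModEq p (A * B) 1) (hMteq : Mt = A * M * B) (j : ℕ) :
    ∀ i k, (p : ℤ) ∣ (Rmat M Mt A B j) i k := by
  unfold Rmat
  set ψ : ℤ →+* ZMod p := Int.castRingHom (ZMod p)
  set Ψ : Matrix (Fin n) (Fin n) ℤ →+* Matrix (Fin n) (Fin n) (ZMod p) := ψ.mapMatrix with hΨ
  have hab : Ψ A * Ψ B = 1 := by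
    have h1 : Ψ (A * B) = 1 := by
      ext i k
      have e : (((A * B) i k : ℤ) : ZMod p) = (((1 : Matrix (Fin n) (Fin n) ℤ) i k : ℤ) : ZMod p) := by
        rw [← sub_eq_zero, ← Int.cast_sub, ZMod.intCast_zmod_eq_zero_iff_dvd]
        exact hAB i k
      simp only [hΨ, RingHom.mapMatrix_apply, Matrix.map_apply]
      rw [show ψ ((A * B) i k) = (((A * B) i k : ℤ) : ZMod p) from rfl, e]
      simp [Matrix.one_apply, apply_ite (Int.cast : ℤ → ZMod p)]
    rwa [_root_.map_mul] at h1
  have hba : Ψ B * Ψ A = 1 := mul_eq_one_comm.mp hab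
  have hdet : (Ψ A).det * (Ψ B).det = 1 := by rw [← Matrix.det_mul, hab, Matrix.det_one]
  have hadjb : (Ψ B).adjugate = (Ψ B).det • Ψ A := by
    calc (Ψ B).adjugate = (Ψ B).adjugate * (Ψ B * Ψ A) := by rw [hba, mul_one]
    _ = ((Ψ B).adjugate * Ψ B) * Ψ A := by rw [mul_assoc]
    _ = (Ψ B).det • Ψ A := by rw [Matrix.adjugate_mul, Matrix.smul_mul, one_mul]
  have hadja : (Ψ A).adjugate = (Ψ A).det • Ψ B := by
    calc (Ψ A).adjugate = (Ψ B * Ψ A) * (Ψ A).adjugate := by rw [hba, one_mul]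
    _ = Ψ B * (Ψ A * (Ψ A).adjugate) := by rw [mul_assoc]
    _ = (Ψ A).det • Ψ B := by rw [Matrix.mul_adjugate, Matrix.mul_smul, mul_one]
  have hzero : Ψ ((A * B).det ^ j • (B.adjugate * M ^ j * A.adjugate) - Mt ^ j) = 0 := by
    have hsm : (A * B).det ^ j • (B.adjugate * M ^ j * A.adjugate)
        = (((A * B).det ^ j : ℤ) : Matrix (Fin n) (Fin n) ℤ) * (B.adjugate * M ^ j * A.adjugate) := by
      rw [zsmul_eq_mul]
    rw [map_sub, hsm, _root_.map_mul, map_pow, map_intCast]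
    have hdetAB : (((A * B).det : ℤ) : ZMod p) = 1 := by
      have h2 : ψ ((A * B).det) = (Ψ (A * B)).det := RingHom.map_det ψ (A * B)
      rw [show ψ ((A * B).det) = (((A * B).det : ℤ) : ZMod p) from rfl] at h2
      rw [h2, _root_.map_mul, hab, Matrix.det_one]
    have hΨdet : ((((A * B).det ^ j : ℤ)) : Matrix (Fin n) (Fin n) (ZMod p)) = 1 := by
      rw [← eq_intCast ((Matrix.scalar (Fin n)).comp ψ) ((A * B).det ^ j), RingHom.comp_apply]
      have hψ : ψ ((A * B).det ^ j) = 1 := by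
        rw [map_pow, show ψ ((A * B).det) = (((A * B).det : ℤ) : ZMod p) from rfl, hdetAB,
          one_pow]
      rw [hψ, _root_.map_one]
    rw [hΨdet, one_mul, hMteq]
    simp only [_root_.map_mul, map_pow]
    rw [show Ψ B.adjugate = (Ψ B).adjugate from RingHom.map_adjugate ψ B,
        show Ψ A.adjugate = (Ψ A).adjugate from RingHom.map_adjugate ψ A,
        hadjb, hadja, conj_pow (Ψ A) (Ψ B) (Ψ M) hab hba j]
    simp only [Matrix.smul_mul, Matrix.mul_smul, smul_smul]
    rw [hdet, one_smul, sub_self]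
  intro i k
  have hc : (((((A * B).det ^ j • (B.adjugate * M ^ j * A.adjugate) - Mt ^ j)) i k : ℤ) : ZMod p) = 0 := by
    have h3 := congrFun (congrFun hzero i) k
    simpa [hΨ, RingHom.mapMatrix_apply, Matrix.map_apply, ψ] using h3
  exact (ZMod.intCast_zmod_eq_zero_iff_dvd _ _).mp hc

lemma key_idR (M Mt A B : Matrix (Fin n) (Fin n) ℤ) (j : ℕ) :
    (toR A)ᵀ * (((toR Mt)ᵀ) ^ j * (toR B)ᵀ + (toR (Rmat M Mt A B j))ᵀ * (toR B)ᵀ)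
      = (((A * B).det ^ (j + 1) : ℤ) : ℝ) • ((toR M)ᵀ ^ j) := by
  have k2 := congrArg (fun X : Matrix (Fin n) (Fin n) ℤ => (toR X)ᵀ) (key_id M Mt A B j)
  rw [show Mt ^ j + ((A * B).det ^ j • (B.adjugate * M ^ j * A.adjugate) - Mt ^ j)
      = Mt ^ j + Rmat M Mt A B j from rfl] at k2
  simp only [toR_mul, toR_add, toR_pow, toR_smul, Matrix.transpose_mul,
    Matrix.transpose_add, Matrix.transpose_smul, Matrix.transpose_pow] at k2
  rw [← k2, ← Matrix.add_mul, ← mul_assoc]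

/-- `(M^t)^j Z(m_D) ⊆ (1/det(AB)^{j+1}) A^t ((M̃^t)^j Z(m_{D̃}) + ℤ^n)`. -/
theorem maskZ_pow_subset {n : ℕ} {p : ℕ} (hp : p.Prime)
    (M Mt : Matrix (Fin n) (Fin n) ℤ) (hM : IsExpanding M) (hMt : IsExpanding Mt)
    (D Dt : Finset (Fin n → ℤ)) (A B : Matrix (Fin n) (Fin n) ℤ)
    (hA : ¬ (p : ℤ) ∣ A.det) (hB : ¬ (p : ℤ) ∣ B.det)
    (hAB : ModEq p (A * B) 1) (hMteq : Mt = A * M * B)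
    (hDeq : ∀ d, d ∈ D ↔ ∃ dt ∈ Dt, d = B.mulVec dt)
    (hZ : ZDn Dt ⊆ Ering p n) (j : ℕ) (hj : 1 ≤ j) :
    ∀ x ∈ maskZ D, ∃ y ∈ maskZ Dt, ∃ v : Fin n → ℤ,
      ((toR M)ᵀ ^ j).mulVec x =
        (((A * B).det ^ (j + 1) : ℤ) : ℝ)⁻¹ •
          (toR A)ᵀ.mulVec (((toR Mt)ᵀ ^ j).mulVec y + vecR v) := by
  intro x hx
  have hAdet : A.det ≠ 0 := fun h => hA (h ▸ dvd_zero _)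
  have hBdet : B.det ≠ 0 := fun h => hB (h ▸ dvd_zero _)
  set w : Fin n → ℝ := (toR B)ᵀ.mulVec x with hw
  have hwZ : w ∈ maskZ Dt := by
    have hmask : mask D x = mask Dt w := mask_comp B hBdet D Dt hDeq x
    simp only [maskZ, Set.mem_setOf_eq] at hx ⊢
    rw [← hmask]
    exact hx
  set m : Fin n → ℤ := fun i => ⌊w i⌋ with hm
  set z : Fin n → ℝ := fun i => Int.fract (w i) with hz
  have hwz : w = z + vecR m := by
    funext i
    show w i = Int.fract (w i) + (⌊w i⌋ : ℝ)
    rw [Int.fract]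
    ring
  have hzZ : z ∈ maskZ Dt := by
    simp only [maskZ, Set.mem_setOf_eq] at hwZ ⊢
    rw [← mask_periodic Dt z m, ← hwz]
    exact hwZ
  have hzbox : z ∈ ZDn Dt := ⟨hzZ, fun i => ⟨Int.fract_nonneg _, Int.fract_lt_one _⟩⟩
  obtain ⟨⟨l, hl1, hl2⟩, -⟩ := hZ hzbox
  have hwi : ∀ i, w i = (l i : ℝ) / p + (m i : ℝ) := by
    intro i
    rw [hwz]
    show z i + vecR m i = _
    rw [hl2 i]
    rfl
  set Rz : Matrix (Fin n) (Fin n) ℤ := Rmat M Mt A B j with hRzdef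
  have hdvd : ∀ i k, (p : ℤ) ∣ Rz i k := R_dvd p M Mt A B hAB hMteq j
  refine ⟨w, hwZ, fun i => ∑ k, (Rz k i / p * (l k : ℤ) + Rz k i * m k), ?_⟩
  have hvR : vecR (fun i => ∑ k, (Rz k i / p * (l k : ℤ) + Rz k i * m k))
      = (toR Rz)ᵀ.mulVec w := by
    funext i
    simp only [vecR, Matrix.mulVec, dotProduct, Matrix.transpose_apply, toR,
      Matrix.map_apply]
    push_cast
    apply Finset.sum_congr rfl
    intro k _
    rw [hwi k]
    obtain ⟨q, hq⟩ := hdvd k i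
    have hq2 : Rz k i / (p : ℤ) = q := by
      rw [hq, Int.mul_ediv_cancel_left _ (by exact_mod_cast hp.ne_zero)]
    rw [hq2, hq]
    have hpR : (p : ℝ) ≠ 0 := Nat.cast_ne_zero.mpr hp.ne_zero
    push_cast
    field_simp
  have hcR : (((A * B).det ^ (j + 1) : ℤ) : ℝ) ≠ 0 := by
    rw [Int.cast_ne_zero]
    exact pow_ne_zero _ (by rw [Matrix.det_mul]; exact mul_ne_zero hAdet hBdet)
  have key' : (toR A)ᵀ * (((toR Mt)ᵀ) ^ j * (toR B)ᵀ + (toR Rz)ᵀ * (toR B)ᵀ)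
      = (((A * B).det ^ (j + 1) : ℤ) : ℝ) • ((toR M)ᵀ ^ j) := key_idR M Mt A B j
  have H : (toR A)ᵀ.mulVec (((toR Mt)ᵀ ^ j).mulVec w
        + vecR (fun i => ∑ k, (Rz k i / p * (l k : ℤ) + Rz k i * m k)))
      = (((A * B).det ^ (j + 1) : ℤ) : ℝ) • ((toR M)ᵀ ^ j).mulVec x := by
    rw [hvR, hw, Matrix.mulVec_mulVec, Matrix.mulVec_mulVec, ← Matrix.add_mulVec,
      Matrix.mulVec_mulVec, key', Matrix.smul_mulVec]
  rw [H, inv_smul_smul₀ hcR]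


end SA
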